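/- Let φ: R → R be defined by φ(y) = e^{-y} · log E[exp(e^y · X)] for a bounded real random variable X with E X = 0. Suppose φ'(y) ≤ C·e^y·B for all y ∈ R, where B > 0. Then for all L > 0, log E[exp(L·X)] ≤ C·L²·B. -/

import Mathlib

open MeasureTheory Real

/-- Herbst-type argument: if `φ(y) = e^{-y} log E[exp(e^y X)]` (for a bounded,
mean-zero random variable `X`) satisfies `φ'(y) ≤ C e^y B` for all `y`, then
`log E[exp(L X)] ≤ C L² B` for all `L > 0`. -/
theorem stmt13 (Ω : Type) [MeasureSpace Ω] (P : Measure Ω) [IsProbabilityMeasure P]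
    (X : Ω → ℝ) (hXm : Measurable X) (M : ℝ) (hXb : ∀ ω, |X ω| ≤ M)
    (hmean : ∫ ω, X ω ∂P = 0) (C B : ℝ) (hC : 0 < C) (hB : 0 < B)
    (φ : ℝ → ℝ)
    (hφ : φ = fun y => Real.exp (-y) * Real.log (∫ ω, Real.exp (Real.exp y * X ω) ∂P))
    (hdiff : ∀ y : ℝ, DifferentiableAt ℝ φ y)
    (hderiv : ∀ y : ℝ, deriv φ y ≤ C * Real.exp y * B) :
    ∀ L : ℝ, 0 < L → Real.log (∫ ω, Real.exp (L * X ω) ∂P) ≤ C * L ^ 2 * B := by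
  intro L hL
  set M' : ℝ := max M 0 with hM'
  have hM'0 : 0 ≤ M' := le_max_right _ _
  have hXb' : ∀ ω, |X ω| ≤ M' := fun ω => le_trans (hXb ω) (le_max_left _ _)
  -- integrability facts
  have hXint : Integrable X P := by
    refine (integrable_const M').mono' hXm.aestronglyMeasurable ?_
    exact ae_of_all _ fun ω => by simpa using hXb' ω
  have hXsqint : Integrable (fun ω => X ω ^ 2) P := by
    refine (integrable_const (M' ^ 2)).mono' (hXm.pow_const 2).aestronglyMeasurable ?_
    refine ae_of_all _ fun ω => ?_
    rw [Real.norm_eq_abs, abs_pow]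
    exact pow_le_pow_left₀ (abs_nonneg _) (hXb' ω) 2
  have hexpint : ∀ t : ℝ, Integrable (fun ω => Real.exp (t * X ω)) P := by
    intro t
    refine (integrable_const (Real.exp (|t| * M'))).mono'
      ((Real.measurable_exp.comp (hXm.const_mul t)).aestronglyMeasurable) ?_
    refine ae_of_all _ fun ω => ?_
    rw [Real.norm_eq_abs, abs_of_pos (Real.exp_pos _)]
    refine Real.exp_le_exp.2 ?_
    calc t * X ω ≤ |t * X ω| := le_abs_self _
      _ = |t| * |X ω| := abs_mul _ _
      _ ≤ |t| * M' := by gcongr; exact hXb' ω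
  -- positivity of the mgf
  have hpos : ∀ t : ℝ, 0 < ∫ ω, Real.exp (t * X ω) ∂P := by
    intro t
    have : Real.exp (-(|t| * M')) ≤ ∫ ω, Real.exp (t * X ω) ∂P := by
      have := integral_mono (integrable_const (Real.exp (-(|t| * M')))) (hexpint t)
        (fun ω => Real.exp_le_exp.2 (by
          have h1 : -(|t| * M') ≤ t * X ω := by
            have : |t * X ω| ≤ |t| * M' := by
              rw [abs_mul]; gcongr; exact hXb' ω
            linarith [neg_abs_le (t * X ω)]
          exact h1))
      simpa [integral_const] using this
    exact lt_of_lt_of_le (Real.exp_pos _) this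
  -- bound on φ for small arguments
  have hφsmall : ∀ y : ℝ, Real.exp y * M' ≤ 1 → φ y ≤ Real.exp y * M' ^ 2 := by
    intro y hy
    set t := Real.exp y with hts
    have ht : 0 < t := Real.exp_pos y
    have hpt : ∀ ω, Real.exp (t * X ω) ≤ 1 + t * X ω + (t * X ω) ^ 2 := by
      intro ω
      have habs : |t * X ω| ≤ 1 := by
        rw [abs_mul, abs_of_pos ht]
        exact le_trans (by gcongr; exact hXb' ω) hy
      have := Real.abs_exp_sub_one_sub_id_le habs
      have := abs_le.1 this
      linarith [this.2]
    have hint : (∫ ω, Real.exp (t * X ω) ∂P) ≤ 1 + t ^ 2 * M' ^ 2 := by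
      have h1 : (∫ ω, Real.exp (t * X ω) ∂P) ≤
          ∫ ω, (1 + t * X ω + (t * X ω) ^ 2) ∂P := by
        refine integral_mono (hexpint t) ?_ hpt
        refine (integrable_const 1).add (hXint.const_mul t) |>.add ?_
        have : (fun ω => (t * X ω) ^ 2) = fun ω => t ^ 2 * X ω ^ 2 := by
          funext ω; ring
        rw [this]; exact hXsqint.const_mul _
      have h2 : (∫ ω, (1 + t * X ω + (t * X ω) ^ 2) ∂P) = 1 + t ^ 2 * ∫ ω, X ω ^ 2 ∂P := by
        have : (fun ω => (1 + t * X ω + (t * X ω) ^ 2)) =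
            fun ω => (1 + t * X ω) + t ^ 2 * X ω ^ 2 := by
          funext ω; ring
        rw [this, integral_add (by exact (integrable_const 1).add (hXint.const_mul t))
          (hXsqint.const_mul _), integral_add (integrable_const 1) (hXint.const_mul t),
          integral_const_mul, integral_const_mul, hmean, integral_const]
        simp
      have h3 : (∫ ω, X ω ^ 2 ∂P) ≤ M' ^ 2 := by
        have := integral_mono hXsqint (integrable_const (M' ^ 2))
          (fun ω => by
            rw [← sq_abs (X ω)]
            exact pow_le_pow_left₀ (abs_nonneg _) (hXb' ω) 2)
        simpa [integral_const] using this
      calc (∫ ω, Real.exp (t * X ω) ∂P) ≤ 1 + t ^ 2 * ∫ ω, X ω ^ 2 ∂P := by rw [← h2]; exact h1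
        _ ≤ 1 + t ^ 2 * M' ^ 2 := by gcongr
    have hlog : Real.log (∫ ω, Real.exp (t * X ω) ∂P) ≤ t ^ 2 * M' ^ 2 := by
      calc Real.log (∫ ω, Real.exp (t * X ω) ∂P)
          ≤ (∫ ω, Real.exp (t * X ω) ∂P) - 1 := Real.log_le_sub_one_of_pos (hpos t)
        _ ≤ t ^ 2 * M' ^ 2 := by linarith
    rw [hφ]
    simp only
    rw [Real.exp_neg, ← hts]
    calc t⁻¹ * Real.log (∫ ω, Real.exp (t * X ω) ∂P) ≤ t⁻¹ * (t ^ 2 * M' ^ 2) := by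
          have h0 : (0:ℝ) ≤ t⁻¹ := inv_nonneg.2 ht.le
          exact mul_le_mul_of_nonneg_left hlog h0
        _ = t * M' ^ 2 := by field_simp
  -- antitonicity of φ - C B e^y
  have hanti : Antitone (fun y => φ y - C * B * Real.exp y) := by
    refine antitone_of_deriv_nonpos ?_ ?_
    · intro y
      exact (hdiff y).sub ((Real.differentiable_exp y).const_mul _)
    · intro y
      rw [deriv_fun_sub (hdiff y) ((Real.differentiable_exp y).const_mul _)]
      rw [deriv_const_mul _ (Real.differentiable_exp y), Real.deriv_exp]
      have := hderiv y
      nlinarith [Real.exp_pos y]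
  -- conclude φ (log L) ≤ C * B * L
  have hkey : φ (Real.log L) ≤ C * B * L := by
    refine le_of_forall_pos_le_add fun ε hε => ?_
    set t0 : ℝ := min (min L (1 / (M' + 1))) (ε / (M' ^ 2 + 1)) with ht0
    have ht0pos : 0 < t0 := by
      refine lt_min (lt_min hL ?_) ?_
      · positivity
      · positivity
    have hy0 : Real.log t0 ≤ Real.log L :=
      Real.log_le_log ht0pos (le_trans (min_le_left _ _) (min_le_left _ _))
    have hexp_t0 : Real.exp (Real.log t0) = t0 := Real.exp_log ht0pos
    have hsmall : Real.exp (Real.log t0) * M' ≤ 1 := by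
      rw [hexp_t0]
      have h1 : t0 ≤ 1 / (M' + 1) := le_trans (min_le_left _ _) (min_le_right _ _)
      have : t0 * M' ≤ (1 / (M' + 1)) * M' := by gcongr
      have h2 : (1 / (M' + 1)) * M' ≤ 1 := by
        rw [div_mul_eq_mul_div, one_mul, div_le_one (by linarith)]
        linarith
      linarith
    have hmono := hanti hy0
    simp only at hmono
    have hsm := hφsmall (Real.log t0) hsmall
    rw [hexp_t0] at hsm
    have hε2 : t0 * M' ^ 2 ≤ ε := by
      have h1 : t0 ≤ ε / (M' ^ 2 + 1) := min_le_right _ _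
      have : t0 * M' ^ 2 ≤ (ε / (M' ^ 2 + 1)) * M' ^ 2 := by gcongr
      have h2 : (ε / (M' ^ 2 + 1)) * M' ^ 2 ≤ ε := by
        rw [div_mul_eq_mul_div, div_le_iff₀ (by positivity)]
        nlinarith
      linarith
    have hexpL : Real.exp (Real.log L) = L := Real.exp_log hL
    rw [hexpL, hexp_t0] at hmono
    nlinarith [Real.exp_pos (Real.log t0), mul_pos (mul_pos hC hB) ht0pos]
  -- finish
  have hφL : φ (Real.log L) = L⁻¹ * Real.log (∫ ω, Real.exp (L * X ω) ∂P) := by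
    rw [hφ]
    simp only
    rw [Real.exp_neg, Real.exp_log hL]
  rw [hφL] at hkey
  have := mul_le_mul_of_nonneg_left hkey hL.le
  rw [← mul_assoc, mul_inv_cancel₀ hL.ne', one_mul] at this
  nlinarith
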